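/- Let (X, d) be a compact metric space and f : X → X an expansive homeomorphism (there exists ε > 0 such that for all x ≠ y in X there is n ∈ ℤ with d(f^n x, f^n y) > ε) satisfying specification (for each ε > 0 there is p(ε) ∈ ℕ such that: given points x_1, …, x_k ∈ X and integer intervals I_1, …, I_k contained in [a, b] with pairwise distance at least p(ε), there exists x ∈ X with f^{b−a+p(ε)}(x) = x and d(f^j x, f^j x_i) < ε for all j ∈ I_i and all i). Then the fixed-point sets Fix(f^n) are finite and there exist constants A, B > 0 and N ∈ ℕ such that for all n ≥ N, A·exp(h(f)·n) ≤ #Fix(f^n) ≤ B·exp(h(f)·n), where h(f) is the topological entropy of f. -/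

import Mathlib

open Dynamics Set Uniformity UniformSpace Filter ENNReal EReal
open scoped SetRel

namespace BowenAux

variable {X : Type*} [MetricSpace X]

/-- closed metric entourage -/
def W (X : Type*) [MetricSpace X] (r : ℝ) : Set (X × X) := {p | dist p.1 p.2 ≤ r}

lemma W_mem {r : ℝ} (hr : 0 < r) : W X r ∈ 𝓤 X := by
  apply Metric.mem_uniformity_dist.2 ⟨r, hr, ?_⟩
  intro a b h
  exact le_of_lt h

instance W_symm (r : ℝ) : SetRel.IsSymm (W X r) := by
  refine ⟨fun a b h => ?_⟩
  change dist b a ≤ r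
  rw [dist_comm]
  exact h

lemma W_rfl {r : ℝ} (hr : 0 ≤ r) : SetRel.IsRefl (W X r) := by
  refine ⟨fun a => ?_⟩
  change dist a a ≤ r
  simpa using hr

lemma W_comp {r s : ℝ} : W X r ○ W X s ⊆ W X (r + s) := by
  rintro ⟨a, b⟩ ⟨c, h1, h2⟩
  simp only [W, Set.mem_setOf_eq] at *
  exact (dist_triangle a c b).trans (add_le_add h1 h2)

lemma W_mono {r s : ℝ} (h : r ≤ s) : W X r ⊆ W X s := fun p hp => le_trans hp h

lemma mem_W {r : ℝ} {a b : X} : (a, b) ∈ W X r ↔ dist a b ≤ r := Iff.rfl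

variable (f : X ≃ₜ X)

lemma zpow_natCast_apply (n : ℕ) (x : X) : (f.toEquiv ^ (n : ℤ)) x = (⇑f)^[n] x := by
  rw [zpow_natCast]
  induction n generalizing x with
  | zero => simp
  | succ k ih =>
      rw [pow_succ, Function.iterate_succ_apply, Equiv.Perm.mul_apply]
      have : f.toEquiv x = f x := rfl
      rw [this, ih (f x)]

lemma zpow_neg_natCast_apply (n : ℕ) (x : X) :
    (f.toEquiv ^ (-(n : ℤ))) x = (⇑f.symm)^[n] x := by
  rw [zpow_neg, zpow_natCast]
  induction n generalizing x with
  | zero => simp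
  | succ k ih =>
      rw [pow_succ, Function.iterate_succ_apply', mul_inv_rev, Equiv.Perm.mul_apply, ih x]
      rfl

lemma continuous_zpow (m : ℤ) : Continuous fun x : X => (f.toEquiv ^ m) x := by
  rcases le_or_gt 0 m with hm | hm
  · obtain ⟨n, rfl⟩ := Int.eq_ofNat_of_zero_le hm
    have : (fun x : X => (f.toEquiv ^ (n : ℤ)) x) = (⇑f)^[n] := by
      funext x; exact zpow_natCast_apply f n x
    rw [this]
    exact f.continuous.iterate n
  · obtain ⟨n, rfl⟩ : ∃ n : ℕ, m = -(n : ℤ) := ⟨m.natAbs, by omega⟩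
    have : (fun x : X => (f.toEquiv ^ (-(n : ℤ))) x) = (⇑f.symm)^[n] := by
      funext x; exact zpow_neg_natCast_apply f n x
    rw [this]
    exact f.symm.continuous.iterate n

lemma fix_zpow {x : X} {g : Equiv.Perm X} (hx : g x = x) : ∀ q : ℤ, (g ^ q) x = x := by
  have hnat : ∀ q : ℕ, (g ^ q) x = x := by
    intro q
    induction q with
    | zero => simp
    | succ k ih => rw [pow_succ, Equiv.Perm.mul_apply, hx, ih]
  intro q
  rcases le_or_gt 0 q with hq | hq
  · obtain ⟨n, rfl⟩ := Int.eq_ofNat_of_zero_le hq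
    rw [zpow_natCast]; exact hnat n
  · obtain ⟨n, rfl⟩ : ∃ n : ℕ, q = -(n : ℤ) := ⟨q.natAbs, by omega⟩
    rw [zpow_neg, zpow_natCast]
    have := hnat n
    conv_lhs => rw [← this]
    simp

lemma zpow_fix {x : X} {n : ℕ} (hn : 0 < n) (hx : (⇑f)^[n] x = x) (m : ℤ) :
    (f.toEquiv ^ m) x = (⇑f)^[(m % (n : ℤ)).toNat] x := by
  have hfix : (f.toEquiv ^ (n : ℤ)) x = x := by rw [zpow_natCast_apply]; exact hx
  have key : (f.toEquiv ^ ((n : ℤ) * (m / (n : ℤ)))) x = x := by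
    rw [zpow_mul]
    exact fix_zpow hfix _
  have hm : m = m % (n : ℤ) + (n : ℤ) * (m / (n : ℤ)) := by
    rw [Int.emod_def]; ring
  calc (f.toEquiv ^ m) x = (f.toEquiv ^ (m % (n : ℤ)) * f.toEquiv ^ ((n : ℤ) * (m / (n : ℤ)))) x := by
        rw [← zpow_add, ← hm]
    _ = (f.toEquiv ^ (m % (n : ℤ))) x := by rw [Equiv.Perm.mul_apply, key]
    _ = (⇑f)^[(m % (n : ℤ)).toNat] x := by
        rw [← zpow_natCast_apply, Int.toNat_of_nonneg (Int.emod_nonneg m (by exact_mod_cast hn.ne'))]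


section Expansive

variable {f : X ≃ₜ X} {e0 : ℝ}
  (hexp : ∀ x y : X, x ≠ y → ∃ n : ℤ, e0 < dist ((f.toEquiv ^ n) x) ((f.toEquiv ^ n) y))

include hexp in
/-- periodic points of the same period are separated at some time within any window of
length `n`. -/
lemma sep_shift {n : ℕ} (hn : 0 < n) {x y : X} (hx : (⇑f)^[n] x = x) (hy : (⇑f)^[n] y = y)
    (hxy : x ≠ y) (c : ℤ) :
    ∃ m : ℤ, c ≤ m ∧ m ≤ c + n - 1 ∧ e0 < dist ((f.toEquiv ^ m) x) ((f.toEquiv ^ m) y) := by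
  obtain ⟨m₀, hm₀⟩ := hexp x y hxy
  have hnz : (n : ℤ) ≠ 0 := by exact_mod_cast hn.ne'
  refine ⟨c + (m₀ - c) % n, le_add_of_nonneg_right (Int.emod_nonneg _ hnz), ?_, ?_⟩
  · have := Int.emod_lt_of_pos (m₀ - c) (Int.natCast_pos.mpr hn)
    omega
  · have hmod : (c + (m₀ - c) % (n : ℤ)) % (n : ℤ) = m₀ % (n : ℤ) := by
      conv_rhs => rw [show m₀ = c + (m₀ - c) by ring]
      rw [Int.add_emod (c) ((m₀ - c) % (n:ℤ)), Int.emod_emod_of_dvd _ dvd_rfl, ← Int.add_emod]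
    rw [zpow_fix f hn hx, zpow_fix f hn hy, hmod, ← zpow_fix f hn hx m₀, ← zpow_fix f hn hy m₀]
    exact hm₀

include hexp in
/-- uniform expansiveness, by compactness. -/
lemma uniform_expansive [CompactSpace X] (he0 : 0 < e0) {σ : ℝ} (hσ : 0 < σ) :
    ∃ N : ℕ, ∀ x y : X, σ ≤ dist x y →
      ∃ i : ℤ, |i| ≤ N ∧ e0 < dist ((f.toEquiv ^ i) x) ((f.toEquiv ^ i) y) := by
  by_contra hcon
  push_neg at hcon
  set A : ℕ → Set (X × X) := fun N =>
    {q : X × X | σ ≤ dist q.1 q.2} ∩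
      ⋂ (i : ℤ) (_ : |i| ≤ (N : ℤ)),
        {q : X × X | dist ((f.toEquiv ^ i) q.1) ((f.toEquiv ^ i) q.2) ≤ e0} with hA
  have hclosed : ∀ N, IsClosed (A N) := by
    intro N
    apply IsClosed.inter
    · exact isClosed_le continuous_const (Continuous.dist continuous_fst continuous_snd)
    · refine isClosed_iInter fun i => isClosed_iInter fun _ => ?_
      exact isClosed_le (Continuous.dist ((continuous_zpow f i).comp continuous_fst)
        ((continuous_zpow f i).comp continuous_snd)) continuous_const
  have hnon : ∀ N, (A N).Nonempty := by
    intro N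
    obtain ⟨x, y, hd, hsep⟩ := hcon N
    refine ⟨(x, y), hd, ?_⟩
    simp only [Set.mem_iInter]
    intro i hi
    exact hsep i hi
  have hdir : Directed (· ⊇ ·) A := by
    intro a b
    refine ⟨max a b, fun q hq => ⟨hq.1, ?_⟩, fun q hq => ⟨hq.1, ?_⟩⟩ <;>
    · obtain ⟨hq1, hq2⟩ := hq
      simp only [Set.mem_iInter] at hq2 ⊢
      intro i hi
      refine hq2 i (hi.trans ?_)
      exact_mod_cast by omega
  have hint : (⋂ N, A N).Nonempty :=
    IsCompact.nonempty_iInter_of_directed_nonempty_isCompact_isClosed A hdir hnon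
      (fun N => (hclosed N).isCompact) hclosed
  obtain ⟨⟨x, y⟩, hq⟩ := hint
  simp only [Set.mem_iInter] at hq
  have hxy : x ≠ y := by
    intro h
    have := (hq 0).1
    simp only [Set.mem_setOf_eq, h, dist_self] at this
    linarith
  obtain ⟨i, hi⟩ := hexp x y hxy
  have hmem := (hq i.natAbs).2
  simp only [Set.mem_iInter] at hmem
  have := hmem i (le_of_eq (Int.abs_eq_natAbs i))
  simp only [Set.mem_setOf_eq] at this
  linarith

include hexp in
lemma sep_shift_nat {n : ℕ} (hn : 0 < n) {x y : X} (hx : (⇑f)^[n] x = x) (hy : (⇑f)^[n] y = y)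
    (hxy : x ≠ y) (c : ℕ) :
    ∃ m : ℕ, c ≤ m ∧ m < c + n ∧ e0 < dist ((⇑f)^[m] x) ((⇑f)^[m] y) := by
  obtain ⟨m, h1, h2, h3⟩ := sep_shift hexp hn hx hy hxy (c : ℤ)
  have hm0 : 0 ≤ m := le_trans (by positivity) h1
  refine ⟨m.toNat, by omega, by omega, ?_⟩
  have : (f.toEquiv ^ m) x = (⇑f)^[m.toNat] x := by
    rw [← zpow_natCast_apply, Int.toNat_of_nonneg hm0]
  have h2' : (f.toEquiv ^ m) y = (⇑f)^[m.toNat] y := by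
    rw [← zpow_natCast_apply, Int.toNat_of_nonneg hm0]
  rwa [this, h2'] at h3

end Expansive


section Balls

variable (f : X ≃ₜ X)

lemma zpow_zpow (m l : ℤ) (x : X) :
    (f.toEquiv ^ m) ((f.toEquiv ^ l) x) = (f.toEquiv ^ (m + l)) x := by
  rw [zpow_add, Equiv.Perm.mul_apply]

lemma disjoint_dynballs {r : ℝ} {a b : X} {n : ℕ}
    (h : ∃ k < n, 2 * r < dist ((⇑f)^[k] a) ((⇑f)^[k] b)) :
    Disjoint (ball a (dynEntourage ⇑f (W X r) n)) (ball b (dynEntourage ⇑f (W X r) n)) := by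
  obtain ⟨k, hk, hd⟩ := h
  rw [Set.disjoint_left]
  intro z hza hzb
  rw [mem_ball_dynEntourage] at hza hzb
  have h1 : dist ((⇑f)^[k] a) ((⇑f)^[k] z) ≤ r := hza k hk
  have h2 : dist ((⇑f)^[k] b) ((⇑f)^[k] z) ≤ r := hzb k hk
  have := dist_triangle ((⇑f)^[k] a) ((⇑f)^[k] z) ((⇑f)^[k] b)
  rw [dist_comm ((⇑f)^[k] z) ((⇑f)^[k] b)] at this
  linarith

lemma sep_of_isDynNetIn {r : ℝ} (hr : 0 ≤ r) {s : Set X} {n : ℕ}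
    (hs : IsDynNetIn ⇑f Set.univ (W X r) n s) {x y : X} (hx : x ∈ s) (hy : y ∈ s)
    (hxy : x ≠ y) :
    ∃ k < n, r < dist ((⇑f)^[k] x) ((⇑f)^[k] y) := by
  have hdisj : Disjoint (ball x (dynEntourage ⇑f (W X r) n))
      (ball y (dynEntourage ⇑f (W X r) n)) := hs.2 hx hy hxy
  have hxball : x ∈ ball x (dynEntourage ⇑f (W X r) n) := by
    rw [mem_ball_dynEntourage]
    intro k _
    change dist _ _ ≤ r
    simpa using hr
  have hnot : x ∉ ball y (dynEntourage ⇑f (W X r) n) :=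
    fun h => Set.disjoint_left.1 hdisj hxball ((Set.disjoint_left.1 hdisj.symm h hxball).elim)
  rw [mem_ball_dynEntourage] at hnot
  push_neg at hnot
  obtain ⟨k, hk, hsep⟩ := hnot
  refine ⟨k, hk, ?_⟩
  have : ¬ dist ((⇑f)^[k] y) ((⇑f)^[k] x) ≤ r := hsep
  rw [dist_comm] at this
  linarith [not_le.1 this]

end Balls


section Shift

variable {f : X ≃ₜ X} {e0 : ℝ}

/-- Pushing a dynamical net backwards by `N` steps turns separation within a window
`[-N, n+N]` into separation at nonnegative times. -/
lemma netMaxcard_le_shift (he0 : 0 < e0) {σ : ℝ} (hσ : 0 < σ) {N : ℕ}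
    (hUE : ∀ x y : X, σ ≤ dist x y →
      ∃ i : ℤ, |i| ≤ N ∧ e0 < dist ((f.toEquiv ^ i) x) ((f.toEquiv ^ i) y)) (j : ℕ) :
    netMaxcard ⇑f Set.univ (W X σ) j ≤ netMaxcard ⇑f Set.univ (W X (e0 / 3)) (j + 2 * N) := by
  classical
  have hunfold : netMaxcard ⇑f Set.univ (W X σ) j
      = ⨆ (s : Finset X) (_ : IsDynNetIn ⇑f Set.univ (W X σ) j ↑s), (s.card : ℕ∞) := rfl
  rw [hunfold]
  apply iSup₂_le
  intro s hs
  set Ψ : X → X := fun x => (f.toEquiv ^ (-(N : ℤ))) x with hΨ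
  have hinj : Function.Injective Ψ := (f.toEquiv ^ (-(N : ℤ))).injective
  set s' : Finset X := s.image Ψ with hs'
  have hcard : s'.card = s.card := Finset.card_image_of_injective s hinj
  have hnet : IsDynNetIn ⇑f Set.univ (W X (e0 / 3)) (j + 2 * N) ↑s' := by
    refine ⟨Set.subset_univ _, ?_⟩
    intro a ha b hb hab
    rw [hs', Finset.coe_image] at ha hb
    obtain ⟨x, hx, rfl⟩ := ha
    obtain ⟨y, hy, rfl⟩ := hb
    have hxy : x ≠ y := fun h => hab (by rw [h])
    obtain ⟨k, hk, hsep⟩ := sep_of_isDynNetIn f hσ.le hs hx hy hxy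
    obtain ⟨i, hiN, hi⟩ := hUE ((⇑f)^[k] x) ((⇑f)^[k] y) (by
      rw [← zpow_natCast_apply, ← zpow_natCast_apply] at hsep ⊢
      exact hsep.le)
    obtain ⟨hil, hir⟩ := abs_le.1 hiN
    rw [← zpow_natCast_apply, ← zpow_natCast_apply, zpow_zpow, zpow_zpow] at hi
    apply disjoint_dynballs f
    refine ⟨((k : ℤ) + i + N).toNat, by omega, ?_⟩
    have htn : (((k : ℤ) + i + N).toNat : ℤ) = (k : ℤ) + i + N := Int.toNat_of_nonneg (by omega)
    have ha' : (⇑f)^[((k : ℤ) + i + N).toNat] (Ψ x) = (f.toEquiv ^ (i + (k : ℤ))) x := by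
      rw [← zpow_natCast_apply, hΨ]
      simp only []
      rw [zpow_zpow, htn]
      congr 1
      ring
    have hb' : (⇑f)^[((k : ℤ) + i + N).toNat] (Ψ y) = (f.toEquiv ^ (i + (k : ℤ))) y := by
      rw [← zpow_natCast_apply, hΨ]
      simp only []
      rw [zpow_zpow, htn]
      congr 1
      ring
    rw [ha', hb']
    linarith
  calc (s.card : ℕ∞) = (s'.card : ℕ∞) := by rw [hcard]
    _ ≤ _ := hnet.card_le_netMaxcard

end Shift


section Entropy

variable {f : X ≃ₜ X} {e0 : ℝ}

lemma log_natCast_ennreal {c : ℕ} (hc : 0 < c) :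
    ENNReal.log (c : ℝ≥0∞) = ((Real.log c : ℝ) : EReal) := by
  rw [ENNReal.log_pos_real' (by rw [ENNReal.toReal_natCast]; exact_mod_cast hc),
    ENNReal.toReal_natCast]

/-- **Key upper bound**: the full topological entropy is bounded by the exponential growth
rate of covers at the fixed scale `e0/6`, thanks to expansiveness. -/
lemma coverEntropy_le_log_coverMincard [CompactSpace X] [Nonempty X]
    (hexp : ∀ x y : X, x ≠ y → ∃ n : ℤ, e0 < dist ((f.toEquiv ^ n) x) ((f.toEquiv ^ n) y))
    (he0 : 0 < e0) {m : ℕ} (hm : 0 < m) :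
    coverEntropy ⇑f Set.univ
      ≤ log (coverMincard ⇑f Set.univ (W X (e0 / 6)) m) / (m : EReal) := by
  classical
  set C : ℕ∞ := coverMincard ⇑f Set.univ (W X (e0 / 6)) m with hC
  have hCtop : C ≠ ⊤ :=
    (coverMincard_finite_of_isCompact_invariant isCompact_univ (Set.mapsTo_univ _ _)
      (W_mem (by linarith)) m).ne
  have hC1 : 1 ≤ C := (one_le_coverMincard_iff ⇑f Set.univ _ m).2 Set.univ_nonempty
  set c : ℕ := C.toNat with hc
  have hcC : (c : ℕ∞) = C := ENat.coe_toNat hCtop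
  have hc1 : 1 ≤ c := by
    have := hC1
    rw [← hcC] at this
    exact_mod_cast this
  set L : ℝ := Real.log c with hL
  have hL0 : 0 ≤ L := Real.log_nonneg (by exact_mod_cast hc1)
  have hlogC : log (C : ℝ≥0∞) = ((L : ℝ) : EReal) := by
    rw [← hcC, ENat.toENNReal_coe, log_natCast_ennreal (by omega)]
  -- reduce to an entourage bound
  have hmain : ∀ U ∈ 𝓤 X, coverEntropyEntourage ⇑f Set.univ U ≤ ((L / m : ℝ) : EReal) := by
    intro U hU
    obtain ⟨ρ, hρ, hball⟩ := Metric.mem_uniformity_dist.1 hU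
    have hWU : W X (ρ / 2) ⊆ U := fun p hp => hball (lt_of_le_of_lt hp (by linarith))
    have h1 : coverEntropyEntourage ⇑f Set.univ U
        ≤ coverEntropyEntourage ⇑f Set.univ (W X (ρ / 2)) :=
      coverEntropyEntourage_antitone ⇑f Set.univ hWU
    have h2 : coverEntropyEntourage ⇑f Set.univ (W X (ρ / 2))
        ≤ netEntropyEntourage ⇑f Set.univ (W X (ρ / 4)) := by
      refine le_trans (coverEntropyEntourage_antitone ⇑f Set.univ
        (Set.Subset.trans (W_comp : W X (ρ/4) ○ W X (ρ/4) ⊆ W X (ρ/4 + ρ/4))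
          (W_mono (by linarith)))) ?_
      exact (haveI := W_rfl (X := X) (r := ρ / 4) (by linarith)
        coverEntropyEntourage_le_netEntropyEntourage ⇑f Set.univ)
    -- uniform expansiveness at scale ρ/4
    obtain ⟨N, hUE⟩ := uniform_expansive hexp he0 (show (0:ℝ) < ρ / 4 by linarith)
    -- cardinality chain
    have hchain : ∀ j : ℕ, netMaxcard ⇑f Set.univ (W X (ρ / 4)) j
        ≤ C ^ ((j + 2 * N) / m + 1) := by
      intro j
      refine le_trans (netMaxcard_le_shift he0 (show (0:ℝ) < ρ/4 by linarith) hUE j) ?_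
      refine le_trans (netMaxcard_le_coverMincard ⇑f Set.univ (j + 2 * N)) ?_
      refine le_trans (coverMincard_antitone ⇑f Set.univ (j + 2 * N)
        (Set.Subset.trans (W_comp : W X (e0/6) ○ W X (e0/6) ⊆ W X (e0/6 + e0/6))
          (W_mono (by linarith : e0/6 + e0/6 ≤ e0/3)))) ?_
      exact coverMincard_le_pow (Set.mapsTo_univ _ _) hm (j + 2 * N)
    -- pass to limsups
    refine h1.trans (h2.trans ?_)
    have hdom : ∀ᶠ j : ℕ in Filter.atTop,
        log (netMaxcard ⇑f Set.univ (W X (ρ / 4)) j) / (j : EReal)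
          ≤ (((((j + 2 * N + m : ℕ) : ℝ) / m) * L / j : ℝ) : EReal) := by
      filter_upwards [Filter.eventually_ge_atTop 1] with j hj
      set k : ℕ := (j + 2 * N) / m + 1 with hk
      have hstep : log (netMaxcard ⇑f Set.univ (W X (ρ / 4)) j) ≤ ((k * L : ℝ) : EReal) := by
        refine le_trans (log_monotone (ENat.toENNReal_le.2 (hchain j))) ?_
        rw [ENat.toENNReal_pow, ← hcC, ENat.toENNReal_coe, log_pow,
          log_natCast_ennreal (by omega), ← EReal.coe_coe_eq_natCast, ← EReal.coe_mul]
      have hdiv : log (netMaxcard ⇑f Set.univ (W X (ρ / 4)) j) / (j : EReal)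
          ≤ ((k * L : ℝ) : EReal) / (j : EReal) :=
        EReal.div_le_div_right_of_nonneg (Nat.cast_nonneg' j) hstep
      refine hdiv.trans ?_
      rw [← EReal.coe_coe_eq_natCast, ← EReal.coe_div, EReal.coe_le_coe_iff]
      have hj2 : (0 : ℝ) < j := by exact_mod_cast Nat.lt_of_lt_of_le Nat.zero_lt_one hj
      have hm2 : (0 : ℝ) < m := by exact_mod_cast hm
      have hkb : (k : ℝ) ≤ ((j + 2 * N + m : ℕ) : ℝ) / m := by
        have h1 : ((((j + 2 * N) / m : ℕ) : ℝ)) ≤ ((j + 2 * N : ℕ) : ℝ) / (m : ℝ) :=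
          Nat.cast_div_le
        have h2 : ((j + 2 * N + m : ℕ) : ℝ) / m = ((j + 2 * N : ℕ) : ℝ) / m + 1 := by
          push_cast
          field_simp
        rw [hk, h2]
        push_cast
        push_cast at h1
        linarith
      exact div_le_div_of_nonneg_right (mul_le_mul_of_nonneg_right hkb hL0) hj2.le
    -- the dominating sequence converges to L/m
    have hm2 : (0 : ℝ) < m := by exact_mod_cast hm
    have hr : Filter.Tendsto (fun j : ℕ => (((j + 2 * N + m : ℕ) : ℝ) / m) * L / j)
        Filter.atTop (nhds (L / m)) := by
      have t1 : Filter.Tendsto (fun j : ℕ => ((2 * N + m : ℝ)) / j) Filter.atTop (nhds 0) :=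
        tendsto_const_div_atTop_nhds_zero_nat _
      have t2 : Filter.Tendsto (fun j : ℕ => (L / m) * (1 + (2 * N + m : ℝ) / j))
          Filter.atTop (nhds (L / m)) := by
        have : Filter.Tendsto (fun _ : ℕ => (L / m : ℝ)) Filter.atTop (nhds (L / m)) :=
          tendsto_const_nhds
        have t3 := (tendsto_const_nhds : Filter.Tendsto (fun _ : ℕ => (1 : ℝ))
          Filter.atTop (nhds 1)).add t1
        rw [add_zero] at t3
        have t4 := this.mul t3
        rw [mul_one] at t4
        exact t4
      refine t2.congr' ?_
      filter_upwards [Filter.eventually_ge_atTop 1] with j hj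
      have hj2 : (0 : ℝ) < j := by exact_mod_cast Nat.lt_of_lt_of_le Nat.zero_lt_one hj
      push_cast
      field_simp
      ring
    have hlimsup : netEntropyEntourage ⇑f Set.univ (W X (ρ / 4)) ≤ ((L / m : ℝ) : EReal) := by
      have hle := Filter.limsup_le_limsup hdom
      refine le_trans hle ?_
      have : Filter.Tendsto (fun j : ℕ =>
          (((((j + 2 * N + m : ℕ) : ℝ) / m) * L / j : ℝ) : EReal)) Filter.atTop
          (nhds ((L / m : ℝ) : EReal)) := by
        exact (EReal.tendsto_coe.2 hr)
      exact le_of_eq this.limsup_eq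
    exact hlimsup
  have : coverEntropy ⇑f Set.univ = ⨆ U ∈ 𝓤 X, coverEntropyEntourage ⇑f Set.univ U := rfl
  rw [this]
  refine le_trans (iSup₂_le hmain) ?_
  rw [hlogC, ← EReal.coe_coe_eq_natCast, ← EReal.coe_div]

end Entropy


section Fix

variable {f : X ≃ₜ X} {e0 : ℝ}

lemma fix_isDynNetIn
    (hexp : ∀ x y : X, x ≠ y → ∃ n : ℤ, e0 < dist ((f.toEquiv ^ n) x) ((f.toEquiv ^ n) y))
    (he0 : 0 < e0) {n : ℕ} (hn : 0 < n) :
    IsDynNetIn ⇑f Set.univ (W X (e0 / 3)) n {x : X | (⇑f)^[n] x = x} := by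
  refine ⟨Set.subset_univ _, ?_⟩
  intro x hx y hy hxy
  obtain ⟨m, _, hm2, hm3⟩ := sep_shift_nat hexp hn hx hy hxy 0
  exact disjoint_dynballs f ⟨m, by omega, by linarith⟩

lemma fix_finite [CompactSpace X]
    (hexp : ∀ x y : X, x ≠ y → ∃ n : ℤ, e0 < dist ((f.toEquiv ^ n) x) ((f.toEquiv ^ n) y))
    (he0 : 0 < e0) {n : ℕ} (hn : 0 < n) :
    {x : X | (⇑f)^[n] x = x}.Finite := by
  classical
  set P := {x : X | (⇑f)^[n] x = x} with hP
  have hnet := fix_isDynNetIn hexp he0 hn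
  have hfin : netMaxcard ⇑f Set.univ (W X (e0 / 3)) n ≠ ⊤ :=
    ((netMaxcard_le_coverMincard ⇑f Set.univ n).trans_lt
      (coverMincard_finite_of_isCompact_invariant isCompact_univ (Set.mapsTo_univ _ _)
        (W_mem (by linarith)) n)).ne
  set K : ℕ := (netMaxcard ⇑f Set.univ (W X (e0 / 3)) n).toNat with hK
  by_contra hinf
  have hinf2 : P.Infinite := hinf
  obtain ⟨t, htP, htcard⟩ := hinf2.exists_subset_card_eq (K + 1)
  have htnet : IsDynNetIn ⇑f Set.univ (W X (e0 / 3)) n ↑t :=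
    ⟨Set.subset_univ _, hnet.2.subset htP⟩
  have hle := htnet.card_le_netMaxcard
  rw [htcard, ← ENat.coe_toNat hfin, ← hK] at hle
  have : K + 1 ≤ K := by exact_mod_cast hle
  omega

end Fix


section Upper

variable {f : X ≃ₜ X} {e0 : ℝ}

lemma log_card_fix_le [CompactSpace X]
    (hexp : ∀ x y : X, x ≠ y → ∃ n : ℤ, e0 < dist ((f.toEquiv ^ n) x) ((f.toEquiv ^ n) y))
    (he0 : 0 < e0) {p1 : ℕ}
    (hsp : ∀ (k : ℕ) (x : Fin k → X) (a b : ℤ) (l u : Fin k → ℤ),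
      (∀ i, a ≤ l i ∧ l i ≤ u i ∧ u i ≤ b) →
      (∀ i j, i ≠ j → ∀ s ∈ Set.Icc (l i) (u i), ∀ t ∈ Set.Icc (l j) (u j),
        (p1 : ℤ) ≤ |s - t|) →
      ∃ x₀ : X, (f.toEquiv ^ (b - a + p1)) x₀ = x₀ ∧
        ∀ i, ∀ m ∈ Set.Icc (l i) (u i),
          dist ((f.toEquiv ^ m) x₀) ((f.toEquiv ^ m) (x i)) < e0 / 4)
    {n : ℕ} (hn : 0 < n) :
    ((Real.log (Nat.card {x : X | (⇑f)^[n] x = x}) / ((n + p1 : ℕ) : ℝ) : ℝ) : EReal)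
      ≤ coverEntropy ⇑f Set.univ := by
  classical
  set P := {x : X | (⇑f)^[n] x = x} with hPdef
  have hPfin := fix_finite hexp he0 hn
  set EP := hPfin.toFinset with hEP
  -- P is nonempty thanks to specification with no constraints
  have hPne : P.Nonempty := by
    obtain ⟨x₀, hx₀, -⟩ := hsp 0 (fun i => i.elim0) 0 ((n : ℤ) - p1)
      (fun i => i.elim0) (fun i => i.elim0) (fun i => i.elim0) (fun i _ _ => i.elim0)
    have harith : (n : ℤ) - p1 - 0 + p1 = (n : ℤ) := by ring
    rw [harith, zpow_natCast_apply] at hx₀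
    exact ⟨x₀, hx₀⟩
  set c : ℕ := EP.card with hc
  have hc1 : 1 ≤ c := Finset.card_pos.2 (hPfin.toFinset_nonempty.2 hPne)
  have hNat : Nat.card P = c := by
    rw [Nat.card_coe_set_eq, Set.ncard_eq_toFinset_card P hPfin]
  set q : ℕ := n + p1 with hqdef
  have hq : 0 < q := by omega
  have hnq : (n : ℤ) ≤ (q : ℤ) := by push_cast; omega
  -- key counting estimate
  have key : ∀ k : ℕ, 0 < k →
      ((c ^ k : ℕ) : ℕ∞) ≤ netMaxcard ⇑f Set.univ (W X (e0 / 4)) (k * q) := by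
    intro k hk
    have hchoice : ∀ y : Fin k → X, (∀ i, y i ∈ P) → ∃ z : X,
        ∀ i : Fin k, ∀ m ∈ Set.Icc ((i : ℤ) * q) ((i : ℤ) * q + n - 1),
          dist ((f.toEquiv ^ m) z) ((f.toEquiv ^ m) (y i)) < e0 / 4 := by
      intro y _
      have hcond1 : ∀ i : Fin k, (0:ℤ) ≤ (i : ℤ) * q ∧ (i : ℤ) * q ≤ (i : ℤ) * q + n - 1 ∧
          (i : ℤ) * q + n - 1 ≤ ((k : ℤ) - 1) * q + n - 1 := by
        intro i
        have hik : (i : ℤ) ≤ (k : ℤ) - 1 := by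
          have := i.isLt
          omega
        have h1 : (0 : ℤ) ≤ (i : ℤ) * q := mul_nonneg (by positivity) (by positivity)
        have h2 : (i : ℤ) * q ≤ ((k : ℤ) - 1) * q :=
          mul_le_mul_of_nonneg_right hik (by positivity)
        exact ⟨h1, by omega, by omega⟩
      have hcond2 : ∀ i j : Fin k, i ≠ j → ∀ s ∈ Set.Icc ((i : ℤ) * q) ((i : ℤ) * q + n - 1),
          ∀ t ∈ Set.Icc ((j : ℤ) * q) ((j : ℤ) * q + n - 1), (p1 : ℤ) ≤ |s - t| := by
        intro i j hij s hs t ht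
        have hq0 : (0 : ℤ) ≤ (q : ℤ) := by positivity
        rcases lt_or_gt_of_ne (fun h => hij (Fin.ext (by exact_mod_cast h))) with h | h
        · have h1 : ((i : ℤ) + 1) * q ≤ (j : ℤ) * q :=
            mul_le_mul_of_nonneg_right (by omega) hq0
          rw [add_one_mul] at h1
          obtain ⟨hs1, hs2⟩ := hs
          obtain ⟨ht1, ht2⟩ := ht
          rw [abs_sub_comm]
          rw [le_abs]
          left
          omega
        · have h1 : ((j : ℤ) + 1) * q ≤ (i : ℤ) * q :=
            mul_le_mul_of_nonneg_right (by omega) hq0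
          rw [add_one_mul] at h1
          obtain ⟨hs1, hs2⟩ := hs
          obtain ⟨ht1, ht2⟩ := ht
          rw [le_abs]
          left
          omega
      obtain ⟨z, -, hz⟩ := hsp k y 0 (((k : ℤ) - 1) * q + n - 1) (fun i => (i : ℤ) * q)
        (fun i => (i : ℤ) * q + n - 1) hcond1 hcond2
      exact ⟨z, hz⟩
    have hXne : Nonempty X := ⟨hPne.some⟩
    choose! Φ hΦ using hchoice
    have hsep : ∀ y y' : Fin k → X, (∀ i, y i ∈ P) → (∀ i, y' i ∈ P) → y ≠ y' →
        ∃ mm, mm < k * q ∧ e0 / 2 < dist ((⇑f)^[mm] (Φ y)) ((⇑f)^[mm] (Φ y')) := by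
      intro y y' hy hy' hne
      obtain ⟨i, hi⟩ := Function.ne_iff.1 hne
      obtain ⟨m, hm1, hm2, hm3⟩ := sep_shift hexp hn (hy i) (hy' i) hi ((i : ℤ) * q)
      have hmIcc : m ∈ Set.Icc ((i : ℤ) * q) ((i : ℤ) * q + n - 1) := ⟨hm1, by omega⟩
      have h1 := hΦ y hy i m hmIcc
      have h2 := hΦ y' hy' i m hmIcc
      have hm0 : 0 ≤ m := le_trans (mul_nonneg (by positivity) (by positivity)) hm1
      have hik : (i : ℤ) ≤ (k : ℤ) - 1 := by
        have := i.isLt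
        omega
      have hiq : (i : ℤ) * q ≤ ((k : ℤ) - 1) * q :=
        mul_le_mul_of_nonneg_right hik (by positivity)
      have hklt : m < (k : ℤ) * q := by
        rw [sub_one_mul] at hiq
        omega
      refine ⟨m.toNat, ?_, ?_⟩
      · have : (m.toNat : ℤ) = m := Int.toNat_of_nonneg hm0
        have hcast : ((k * q : ℕ) : ℤ) = (k : ℤ) * q := by push_cast; ring
        omega
      · have hiter : ∀ z : X, (⇑f)^[m.toNat] z = (f.toEquiv ^ m) z := by
          intro z
          rw [← zpow_natCast_apply, Int.toNat_of_nonneg hm0]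
        rw [hiter, hiter]
        have htri := dist_triangle4 ((f.toEquiv ^ m) (y i)) ((f.toEquiv ^ m) (Φ y))
          ((f.toEquiv ^ m) (Φ y')) ((f.toEquiv ^ m) (y' i))
        rw [dist_comm ((f.toEquiv ^ m) (y i)) ((f.toEquiv ^ m) (Φ y))] at htri
        linarith
    set g : (Fin k → ↥EP) → X := fun y => Φ (fun i => ((y i : X))) with hg
    have hmem : ∀ y : Fin k → ↥EP, ∀ i, ((y i : X)) ∈ P := fun y i =>
      hPfin.mem_toFinset.1 (y i).2
    have hne_of_ne : ∀ a b : Fin k → ↥EP, a ≠ b →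
        (fun i => ((a i : X))) ≠ (fun i => ((b i : X))) := by
      intro a b hne h
      apply hne
      funext i
      exact Subtype.ext (congrFun h i)
    have hginj : Set.InjOn g ↑(Finset.univ : Finset (Fin k → ↥EP)) := by
      intro a _ b _ hab
      by_contra hne
      obtain ⟨mm, -, hd⟩ := hsep _ _ (hmem a) (hmem b) (hne_of_ne a b hne)
      rw [hg] at hab
      simp only [] at hab
      rw [hab, dist_self] at hd
      linarith
    set t : Finset X := (Finset.univ : Finset (Fin k → ↥EP)).image g with ht
    have htcard : t.card = c ^ k := by
      rw [ht, Finset.card_image_of_injOn hginj, Finset.card_univ, Fintype.card_fun,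
        Fintype.card_coe, Fintype.card_fin]
    have htnet : IsDynNetIn ⇑f Set.univ (W X (e0 / 4)) (k * q) ↑t := by
      refine ⟨Set.subset_univ _, ?_⟩
      intro a ha b hb hab
      rw [ht, Finset.coe_image] at ha hb
      obtain ⟨ya, -, rfl⟩ := ha
      obtain ⟨yb, -, rfl⟩ := hb
      have hyane : ya ≠ yb := fun h => hab (by rw [h])
      obtain ⟨mm, hmm, hd⟩ := hsep _ _ (hmem ya) (hmem yb) (hne_of_ne ya yb hyane)
      exact disjoint_dynballs f ⟨mm, hmm, by linarith⟩
    calc ((c ^ k : ℕ) : ℕ∞) = (t.card : ℕ∞) := by rw [htcard]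
      _ ≤ _ := htnet.card_le_netMaxcard
  -- pass to the entropy
  have hfreq : ∃ᶠ j in Filter.atTop, ((Real.log c / q : ℝ) : EReal)
      ≤ log (netMaxcard ⇑f Set.univ (W X (e0 / 4)) j) / (j : EReal) := by
    rw [Filter.frequently_atTop]
    intro a
    refine ⟨(a + 1) * q, ?_, ?_⟩
    · calc a ≤ a + 1 := by omega
        _ ≤ (a + 1) * q := Nat.le_mul_of_pos_right _ hq
    · have hkey := key (a + 1) (Nat.succ_pos a)
      have hlog : ((Real.log (c ^ (a + 1)) : ℝ) : EReal)
          ≤ log (netMaxcard ⇑f Set.univ (W X (e0 / 4)) ((a + 1) * q)) := by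
        refine le_trans (le_of_eq ?_) (log_monotone (ENat.toENNReal_le.2 hkey))
        rw [ENat.toENNReal_coe, log_natCast_ennreal (by positivity)]
        norm_cast
      have hjpos : (0 : EReal) < (((a + 1) * q : ℕ) : EReal) := by
        rw [← EReal.coe_coe_eq_natCast]
        exact_mod_cast (by positivity : (0:ℝ) < (((a + 1) * q : ℕ) : ℝ))
      rw [EReal.le_div_iff_mul_le hjpos (EReal.natCast_ne_top _)]
      refine le_trans (le_of_eq ?_) hlog
      rw [← EReal.coe_coe_eq_natCast, ← EReal.coe_mul, EReal.coe_eq_coe_iff]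
      rw [Real.log_pow]
      have hq2 : (q : ℝ) ≠ 0 := by positivity
      push_cast
      field_simp
  have hnet_le : ((Real.log c / q : ℝ) : EReal)
      ≤ netEntropyEntourage ⇑f Set.univ (W X (e0 / 4)) :=
    le_limsup_of_frequently_le' hfreq
  have hfinal := hnet_le.trans
    (netEntropyEntourage_le_coverEntropy ⇑f Set.univ (W_mem (by linarith)))
  rw [hPdef] at hNat
  rw [hNat]
  exact hfinal

end Upper


section Lower

variable {f : X ≃ₜ X} {e0 : ℝ}

lemma coverEntropy_ne_top [CompactSpace X] [Nonempty X]
    (hexp : ∀ x y : X, x ≠ y → ∃ n : ℤ, e0 < dist ((f.toEquiv ^ n) x) ((f.toEquiv ^ n) y))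
    (he0 : 0 < e0) : coverEntropy ⇑f Set.univ ≠ ⊤ := by
  intro htop
  have h1 := coverEntropy_le_log_coverMincard hexp he0 (m := 1) one_pos
  rw [htop] at h1
  have hCtop : coverMincard ⇑f Set.univ (W X (e0 / 6)) 1 ≠ ⊤ :=
    (coverMincard_finite_of_isCompact_invariant isCompact_univ (Set.mapsTo_univ _ _)
      (W_mem (by linarith)) 1).ne
  have h2 : (⊤ : EReal) * ((1 : ℕ) : EReal)
      ≤ log (coverMincard ⇑f Set.univ (W X (e0 / 6)) 1) :=
    (EReal.le_div_iff_mul_le (by norm_num) (EReal.natCast_ne_top 1)).1 h1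
  rw [Nat.cast_one, mul_one, top_le_iff, log_eq_top_iff, ← ENat.toENNReal_top,
    ENat.toENNReal_inj] at h2
  exact hCtop h2

lemma exp_le_card_fix [CompactSpace X] [Nonempty X]
    (hexp : ∀ x y : X, x ≠ y → ∃ n : ℤ, e0 < dist ((f.toEquiv ^ n) x) ((f.toEquiv ^ n) y))
    (he0 : 0 < e0) {p2 : ℕ}
    (hsp : ∀ (k : ℕ) (x : Fin k → X) (a b : ℤ) (l u : Fin k → ℤ),
      (∀ i, a ≤ l i ∧ l i ≤ u i ∧ u i ≤ b) →
      (∀ i j, i ≠ j → ∀ s ∈ Set.Icc (l i) (u i), ∀ t ∈ Set.Icc (l j) (u j),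
        (p2 : ℤ) ≤ |s - t|) →
      ∃ x₀ : X, (f.toEquiv ^ (b - a + p2)) x₀ = x₀ ∧
        ∀ i, ∀ m ∈ Set.Icc (l i) (u i),
          dist ((f.toEquiv ^ m) x₀) ((f.toEquiv ^ m) (x i)) < e0 / 36)
    {n : ℕ} (hn : p2 + 1 ≤ n) :
    Real.exp ((coverEntropy ⇑f Set.univ).toReal * ((n - p2 + 1 : ℕ) : ℝ))
      ≤ (Nat.card {x : X | (⇑f)^[n] x = x} : ℝ) := by
  classical
  have hn0 : 0 < n := by omega
  set P := {x : X | (⇑f)^[n] x = x} with hPdef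
  have hPfin := fix_finite hexp he0 hn0
  set hE := coverEntropy ⇑f Set.univ with hEdef
  have hfin : hE ≠ ⊤ := coverEntropy_ne_top hexp he0
  have hbot : hE ≠ ⊥ := by
    intro hb
    have := coverEntropy_nonneg ⇑f (Set.univ_nonempty (α := X))
    rw [← hEdef, hb] at this
    exact (lt_irrefl _ (lt_of_lt_of_le bot_lt_zero this)).elim
  set hR : ℝ := hE.toReal with hRdef
  set m : ℕ := n - p2 + 1 with hmdef
  have hm : 0 < m := by omega
  set C : ℕ∞ := coverMincard ⇑f Set.univ (W X (e0 / 6)) m with hC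
  have hCtop : C ≠ ⊤ :=
    (coverMincard_finite_of_isCompact_invariant isCompact_univ (Set.mapsTo_univ _ _)
      (W_mem (by linarith)) m).ne
  have hC1 : 1 ≤ C := (one_le_coverMincard_iff ⇑f Set.univ _ m).2 Set.univ_nonempty
  set c : ℕ := C.toNat with hc
  have hcC : (c : ℕ∞) = C := ENat.coe_toNat hCtop
  have hc1 : 1 ≤ c := by
    have := hC1; rw [← hcC] at this; exact_mod_cast this
  -- from the key upper bound: exp (hR * m) ≤ c
  have hupper := coverEntropy_le_log_coverMincard hexp he0 hm
  rw [← hC, ← hcC, ENat.toENNReal_coe, log_natCast_ennreal (by omega), ← hEdef,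
    ← EReal.coe_coe_eq_natCast, ← EReal.coe_div] at hupper
  have hcoe : hE = ((hR : ℝ) : EReal) := (EReal.coe_toReal hfin hbot).symm
  rw [hcoe, EReal.coe_le_coe_iff] at hupper
  have hexpc : Real.exp (hR * m) ≤ (c : ℝ) := by
    have hmr : (0:ℝ) < (m:ℝ) := by exact_mod_cast hm
    have h2 : hR * m ≤ Real.log c := by
      rw [div_eq_mul_inv] at hupper
      calc hR * m ≤ (Real.log c * (m:ℝ)⁻¹) * m := by
            apply mul_le_mul_of_nonneg_right hupper hmr.le
        _ = Real.log c := by field_simp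
    calc Real.exp (hR * m) ≤ Real.exp (Real.log c) := Real.exp_le_exp.2 h2
      _ = c := Real.exp_log (by exact_mod_cast hc1)
  -- C ≤ maximal net at scale e0/12
  have hCnet : C ≤ netMaxcard ⇑f Set.univ (W X (e0 / 12)) m := by
    refine le_trans (coverMincard_antitone ⇑f Set.univ m
      (Set.Subset.trans (W_comp : W X (e0/12) ○ W X (e0/12) ⊆ W X (e0/12 + e0/12))
        (W_mono (by linarith)))) ?_
    exact (haveI := W_rfl (X := X) (r := e0 / 12) (by linarith)
      coverMincard_le_netMaxcard ⇑f Set.univ m)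
  have hnetfin : netMaxcard ⇑f Set.univ (W X (e0 / 12)) m ≠ ⊤ :=
    ((netMaxcard_le_coverMincard ⇑f Set.univ m).trans_lt
      (coverMincard_finite_of_isCompact_invariant isCompact_univ (Set.mapsTo_univ _ _)
        (W_mem (by linarith)) m)).ne
  obtain ⟨s, hsnet, hscard⟩ := (netMaxcard_finite_iff ⇑f Set.univ (W X (e0 / 12)) m).1
    (lt_of_le_of_ne le_top hnetfin)
  have hcs : c ≤ s.card := by
    have : (c : ℕ∞) ≤ (s.card : ℕ∞) := by rw [hcC, hscard]; exact hCnet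
    exact_mod_cast this
  -- inject s into P via specification
  have hinj : ∀ x : X, x ∈ s → ∃ z : X, (⇑f)^[n] z = z ∧
      ∀ j < m, dist ((⇑f)^[j] z) ((⇑f)^[j] x) < e0 / 36 := by
    intro x _
    have hcond1 : ∀ _ : Fin 1, (0:ℤ) ≤ 0 ∧ (0:ℤ) ≤ (m : ℤ) - 1 ∧ (m : ℤ) - 1 ≤ (n : ℤ) - p2 :=
      fun _ => ⟨le_refl _, by omega, by omega⟩
    have hcond2 : ∀ i j : Fin 1, i ≠ j → ∀ s ∈ Set.Icc (0:ℤ) ((m:ℤ) - 1),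
        ∀ t ∈ Set.Icc (0:ℤ) ((m:ℤ) - 1), (p2 : ℤ) ≤ |s - t| :=
      fun i j hij => absurd (Subsingleton.elim i j) hij
    obtain ⟨z, hz1, hz2⟩ := hsp 1 (fun _ => x) 0 ((n : ℤ) - p2) (fun _ => 0)
      (fun _ => (m : ℤ) - 1) hcond1 hcond2
    refine ⟨z, ?_, ?_⟩
    · have harith : (n : ℤ) - p2 - 0 + p2 = (n : ℤ) := by ring
      rw [harith, zpow_natCast_apply] at hz1
      exact hz1
    · intro j hj
      have hjIcc : (j : ℤ) ∈ Set.Icc (0 : ℤ) ((m : ℤ) - 1) :=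
        ⟨by positivity, by omega⟩
      have := hz2 0 (j : ℤ) hjIcc
      rw [zpow_natCast_apply, zpow_natCast_apply] at this
      exact this
  choose! Φ hΦ using hinj
  have hinjOn : Set.InjOn Φ ↑s := by
    intro x hx y hy hxy
    by_contra hne
    obtain ⟨j, hj, hsep⟩ := sep_of_isDynNetIn f (by linarith : (0:ℝ) ≤ e0/12) hsnet hx hy hne
    have h1 := (hΦ x hx).2 j hj
    have h2 := (hΦ y hy).2 j hj
    rw [hxy] at h1
    have htri := dist_triangle ((⇑f)^[j] x) ((⇑f)^[j] (Φ y)) ((⇑f)^[j] y)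
    rw [dist_comm ((⇑f)^[j] x) ((⇑f)^[j] (Φ y))] at htri
    linarith
  have hmaps : ∀ x ∈ s, Φ x ∈ hPfin.toFinset := by
    intro x hx
    rw [Set.Finite.mem_toFinset]
    exact (hΦ x hx).1
  have hcard2 : s.card ≤ hPfin.toFinset.card := Finset.card_le_card_of_injOn Φ hmaps hinjOn
  have hNat : Nat.card P = hPfin.toFinset.card := by
    rw [Nat.card_coe_set_eq, Set.ncard_eq_toFinset_card P hPfin]
  rw [hPdef] at hNat
  rw [hNat]
  have : (c : ℝ) ≤ (hPfin.toFinset.card : ℝ) := by exact_mod_cast le_trans hcs hcard2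
  exact le_trans hexpc this

end Lower

end BowenAux



open BowenAux Dynamics ENNReal EReal


/-- A homeomorphism `f` of a metric space is expansive if there is `ε > 0` such that any
two distinct points are separated beyond `ε` by some (positive or negative) iterate. -/
def ExpansiveHomeo {X : Type*} [MetricSpace X] (f : X ≃ₜ X) : Prop :=
  ∃ ε : ℝ, 0 < ε ∧ ∀ x y : X, x ≠ y →
    ∃ n : ℤ, ε < dist ((f.toEquiv ^ n) x) ((f.toEquiv ^ n) y)

/-- Bowen's specification property for a homeomorphism `f`: for every `ε > 0` there is
`p(ε) ∈ ℕ` such that, given finitely many points `x i` and integer intervals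
`[l i, u i] ⊆ [a, b]` with pairwise distance at least `p(ε)`, there is a point `x₀` with
`f^{b−a+p(ε)} x₀ = x₀` shadowing each orbit segment with precision `ε`. -/
def SpecificationHomeo {X : Type*} [MetricSpace X] (f : X ≃ₜ X) : Prop :=
  ∀ ε : ℝ, 0 < ε → ∃ p : ℕ,
    ∀ (k : ℕ) (x : Fin k → X) (a b : ℤ) (l u : Fin k → ℤ),
      (∀ i, a ≤ l i ∧ l i ≤ u i ∧ u i ≤ b) →
      (∀ i j, i ≠ j → ∀ s ∈ Set.Icc (l i) (u i), ∀ t ∈ Set.Icc (l j) (u j),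
        (p : ℤ) ≤ |s - t|) →
      ∃ x₀ : X, (f.toEquiv ^ (b - a + p)) x₀ = x₀ ∧
        ∀ i, ∀ m ∈ Set.Icc (l i) (u i),
          dist ((f.toEquiv ^ m) x₀) ((f.toEquiv ^ m) (x i)) < ε

/-- Let `(X, d)` be a compact metric space and `f : X → X` an expansive
homeomorphism satisfying specification. Then the fixed-point sets `Fix(fⁿ)` are finite and
there are constants `A, B > 0` and `N ∈ ℕ` such that for all `n ≥ N`,
`A·exp(h(f)·n) ≤ #Fix(fⁿ) ≤ B·exp(h(f)·n)`, where `h(f)` is the topological entropy. -/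
theorem fixed_points_growth_of_expansive_specification
    {X : Type*} [MetricSpace X] [CompactSpace X]
    (f : X ≃ₜ X)
    (hexp : ExpansiveHomeo f)
    (hspec : SpecificationHomeo f) :
    (∀ n : ℕ, 1 ≤ n → {x : X | (⇑f)^[n] x = x}.Finite) ∧
    ∃ A B : ℝ, 0 < A ∧ 0 < B ∧ ∃ N : ℕ, ∀ n : ℕ, N ≤ n →
      A * Real.exp ((Dynamics.coverEntropy (⇑f) Set.univ).toReal * n) ≤
          (Nat.card {x : X | (⇑f)^[n] x = x} : ℝ) ∧
        (Nat.card {x : X | (⇑f)^[n] x = x} : ℝ) ≤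
          B * Real.exp ((Dynamics.coverEntropy (⇑f) Set.univ).toReal * n) := by
  classical
  obtain ⟨e0, he0, hexp'⟩ := hexp
  obtain ⟨p1, hp1⟩ := hspec (e0 / 4) (by linarith)
  obtain ⟨p2, hp2⟩ := hspec (e0 / 36) (by linarith)
  -- the space is nonempty
  obtain ⟨x₀, -, -⟩ := hp1 0 (fun i => i.elim0) 0 0 (fun i => i.elim0) (fun i => i.elim0)
    (fun i => i.elim0) (fun i _ _ => i.elim0)
  haveI : Nonempty X := ⟨x₀⟩
  refine ⟨fun n hn => fix_finite hexp' he0 hn, ?_⟩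
  set hE : EReal := Dynamics.coverEntropy (⇑f) Set.univ with hEdef
  have hfin : hE ≠ ⊤ := coverEntropy_ne_top hexp' he0
  have hnn : 0 ≤ hE := coverEntropy_nonneg ⇑f (Set.univ_nonempty (α := X))
  have hbot : hE ≠ ⊥ := fun hb => by simp [hb] at hnn
  set hR : ℝ := hE.toReal with hRdef
  have hcoe0 : hE = ((hE.toReal : ℝ) : EReal) := (EReal.coe_toReal hfin hbot).symm
  have hR0 : 0 ≤ hR := by
    have := hnn
    rw [hcoe0] at this
    exact_mod_cast this
  have hcoe : hE = ((hR : ℝ) : EReal) := (EReal.coe_toReal hfin hbot).symm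
  refine ⟨Real.exp (-(p2 : ℝ) * hR), Real.exp ((p1 : ℝ) * hR), Real.exp_pos _,
    Real.exp_pos _, p2 + 1, fun n hn => ?_⟩
  have hn0 : 0 < n := by omega
  set P := {x : X | (⇑f)^[n] x = x} with hPdef
  have hPfin := fix_finite hexp' he0 hn0
  -- positivity of the number of periodic points
  have hPne : P.Nonempty := by
    obtain ⟨z, hz, -⟩ := hp1 0 (fun i => i.elim0) 0 ((n : ℤ) - p1) (fun i => i.elim0)
      (fun i => i.elim0) (fun i => i.elim0) (fun i _ _ => i.elim0)
    have harith : (n : ℤ) - p1 - 0 + p1 = (n : ℤ) := by ring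
    rw [harith, zpow_natCast_apply] at hz
    exact ⟨z, hz⟩
  have hcardpos : 0 < Nat.card P := by
    haveI := hPfin.to_subtype
    haveI : Nonempty ↥P := hPne.to_subtype
    exact Nat.card_pos
  constructor
  · -- lower bound
    have h1 := exp_le_card_fix hexp' he0 hp2 hn
    rw [← hEdef, ← hRdef] at h1
    refine le_trans ?_ h1
    rw [← Real.exp_add]
    apply Real.exp_le_exp.2
    have hsub : ((n - p2 + 1 : ℕ) : ℝ) = (n : ℝ) - p2 + 1 := by
      have : p2 ≤ n := by omega
      push_cast [this]
      ring
    rw [hsub]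
    nlinarith [hR0]
  · -- upper bound
    have h2 := log_card_fix_le hexp' he0 hp1 hn0
    rw [← hEdef, hcoe, EReal.coe_le_coe_iff] at h2
    have hq : (0 : ℝ) < ((n + p1 : ℕ) : ℝ) := by positivity
    have h3 : Real.log (Nat.card P) ≤ hR * ((n + p1 : ℕ) : ℝ) := by
      rw [div_le_iff₀ hq] at h2
      linarith
    have h4 : (Nat.card P : ℝ) ≤ Real.exp (hR * ((n + p1 : ℕ) : ℝ)) := by
      rw [← Real.exp_log (by exact_mod_cast hcardpos : (0:ℝ) < (Nat.card P : ℝ))]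
      exact Real.exp_le_exp.2 h3
    refine le_trans h4 (le_of_eq ?_)
    rw [← Real.exp_add]
    congr 1
    push_cast
    ring
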